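/- A Banach space X has the Daugavet property (every rank-one operator T satisfies ‖I + T‖ = 1 + ‖T‖) if and only if for every x in the unit sphere S_X, every slice S = S(B_X, f, α) of the unit ball (with f ∈ S_{X*}, α > 0), and every ε > 0, there exists y ∈ S with ‖x + y‖ > 2 − ε. -/

import Mathlib

open Metric Set

set_option maxHeartbeats 1000000 in
theorem stmt11 {X : Type*} [NormedAddCommGroup X] [NormedSpace ℝ X] [CompleteSpace X]
    [Nontrivial X] :
    (∀ (g : X →L[ℝ] ℝ) (v : X),
        ‖ContinuousLinearMap.id ℝ X + g.smulRight v‖ = 1 + ‖g.smulRight v‖) ↔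
      (∀ x : X, ‖x‖ = 1 → ∀ f : X →L[ℝ] ℝ, ‖f‖ = 1 → ∀ α : ℝ, 0 < α → ∀ ε : ℝ, 0 < ε →
        ∃ y : X, ‖y‖ ≤ 1 ∧ f y > 1 - α ∧ ‖x + y‖ > 2 - ε) := by
  constructor
  · intro hD x hx f hf α hα ε hε
    set δ : ℝ := min α (ε / 2) with hδdef
    have hδ : 0 < δ := lt_min hα (by linarith)
    have hδα : δ ≤ α := min_le_left _ _
    have hδε : δ ≤ ε / 2 := min_le_right _ _
    set T := f.smulRight x with hT
    have hTnorm : ‖T‖ = 1 := by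
      rw [hT, ContinuousLinearMap.norm_smulRight_apply, hf, hx, one_mul]
    have hI : ‖ContinuousLinearMap.id ℝ X + T‖ = 2 := by
      rw [hD f x, hTnorm]; norm_num
    have hlt : (2 : ℝ) - δ < ‖ContinuousLinearMap.id ℝ X + T‖ := by
      rw [hI]; linarith
    obtain ⟨z, hz1, hz2⟩ := (ContinuousLinearMap.id ℝ X + T).exists_lt_apply_of_lt_opNorm hlt
    have hz1' : ‖z‖ ≤ 1 := le_of_lt hz1
    have happ : (ContinuousLinearMap.id ℝ X + T) z = z + f z • x := by
      simp [hT]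
    rw [happ] at hz2
    have habs : 1 - δ < |f z| := by
      have h1 : ‖z + f z • x‖ ≤ ‖z‖ + |f z| := by
        calc ‖z + f z • x‖ ≤ ‖z‖ + ‖f z • x‖ := norm_add_le _ _
          _ = ‖z‖ + |f z| * ‖x‖ := by rw [norm_smul, Real.norm_eq_abs]
          _ = ‖z‖ + |f z| := by rw [hx, mul_one]
      linarith
    set y : X := if 0 ≤ f z then z else -z with hy
    have hyn : ‖y‖ ≤ 1 := by
      rw [hy]; split <;> simpa
    have hfy : f y = |f z| := by
      rw [hy]; split
      · rwa [abs_of_nonneg]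
      · rw [map_neg, abs_of_neg (by linarith [not_le.mp ‹¬ 0 ≤ f z›])]
    have hkey : 2 - δ < ‖y + f y • x‖ := by
      rw [hy]; split
      · exact hz2
      · rw [map_neg]
        have : -z + -f z • x = -(z + f z • x) := by module
        rw [this, norm_neg]; exact hz2
    have hfy1 : f y ≤ 1 := by
      have := f.le_opNorm y
      rw [hf, one_mul] at this
      calc f y ≤ |f y| := le_abs_self _
        _ = ‖f y‖ := (Real.norm_eq_abs _).symm
        _ ≤ 1 := le_trans this hyn
    refine ⟨y, hyn, ?_, ?_⟩
    · rw [hfy]; linarith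
    · have hsplit : y + f y • x = (x + y) + (f y - 1) • x := by module
      have : ‖y + f y • x‖ ≤ ‖x + y‖ + (1 - f y) := by
        rw [hsplit]
        calc ‖x + y + (f y - 1) • x‖ ≤ ‖x + y‖ + ‖(f y - 1) • x‖ := norm_add_le _ _
          _ = ‖x + y‖ + |f y - 1| * ‖x‖ := by rw [norm_smul, Real.norm_eq_abs]
          _ = ‖x + y‖ + (1 - f y) := by rw [hx, mul_one, abs_of_nonpos (by linarith)]; ring
      have hfyδ : 1 - δ < f y := by rw [hfy]; exact habs
      linarith
  · intro hS g v
    set T := g.smulRight v with hT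
    have hTnorm : ‖T‖ = ‖g‖ * ‖v‖ := ContinuousLinearMap.norm_smulRight_apply g v
    by_cases hg : g = 0
    · subst hg
      have : T = 0 := by ext z; simp [hT]
      rw [this]
      simp [ContinuousLinearMap.norm_id]
    by_cases hv : v = 0
    · subst hv
      have : T = 0 := by ext z; simp [hT]
      rw [this]
      simp [ContinuousLinearMap.norm_id]
    have hgn : 0 < ‖g‖ := norm_pos_iff.mpr hg
    have hvn : 0 < ‖v‖ := norm_pos_iff.mpr hv
    set c : ℝ := ‖g‖ * ‖v‖ with hc
    have hcpos : 0 < c := mul_pos hgn hvn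
    refine le_antisymm ?_ ?_
    · calc ‖ContinuousLinearMap.id ℝ X + T‖ ≤ ‖ContinuousLinearMap.id ℝ X‖ + ‖T‖ :=
        norm_add_le _ _
        _ = 1 + ‖T‖ := by rw [ContinuousLinearMap.norm_id]
    · rw [hTnorm]
      refine le_of_forall_pos_le_add fun ε' hε' => ?_
      set ε : ℝ := min (1/2) (ε' / (1 + 2 * c)) with hεdef
      have h12c : (0:ℝ) < 1 + 2 * c := by linarith
      have hε : 0 < ε := lt_min (by norm_num) (div_pos hε' h12c)
      have hε1 : ε ≤ 1/2 := min_le_left _ _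
      have hεε' : ε * (1 + 2 * c) ≤ ε' := by
        have := min_le_right (1/2 : ℝ) (ε' / (1 + 2 * c))
        calc ε * (1 + 2 * c) ≤ (ε' / (1 + 2 * c)) * (1 + 2 * c) := by
              exact mul_le_mul_of_nonneg_right this (le_of_lt h12c)
          _ = ε' := div_mul_cancel₀ _ (ne_of_gt h12c)
      set x : X := ‖v‖⁻¹ • v with hxdef
      set f : X →L[ℝ] ℝ := ‖g‖⁻¹ • g with hfdef
      have hxn : ‖x‖ = 1 := by
        rw [hxdef, norm_smul, norm_inv, norm_norm, inv_mul_cancel₀ (ne_of_gt hvn)]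
      have hfn : ‖f‖ = 1 := by
        rw [hfdef, norm_smul (‖g‖⁻¹) g, norm_inv, norm_norm,
          inv_mul_cancel₀ (ne_of_gt hgn)]
      obtain ⟨y, hy1, hy2, hy3⟩ := hS x hxn f hfn ε hε ε hε
      have hxy0 : x + y ≠ 0 := by
        intro h0
        rw [h0, norm_zero] at hy3
        linarith
      obtain ⟨h, hh1, hh2⟩ := exists_dual_vector ℝ (x + y) (norm_ne_zero_iff.mpr hxy0)
      have hh2' : h (x + y) = ‖x + y‖ := by exact_mod_cast hh2
      have hhx : h x ≤ 1 := by
        have := h.le_opNorm x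
        rw [hh1, one_mul, hxn] at this
        exact le_trans (le_trans (le_abs_self _) (le_of_eq (Real.norm_eq_abs _).symm)) this
      have hhy : h y ≤ 1 := by
        have := h.le_opNorm y
        rw [hh1, one_mul] at this
        exact le_trans (le_trans (le_abs_self _) (le_of_eq (Real.norm_eq_abs _).symm))
          (le_trans this hy1)
      have hsum : h x + h y > 2 - ε := by
        have hadd : h x + h y = ‖x + y‖ := by rw [← map_add]; exact hh2'
        linarith
      have hhx' : h x > 1 - ε := by linarith
      have hhy' : h y > 1 - ε := by linarith
      have hgy : g y = ‖g‖ * f y := by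
        rw [hfdef]
        simp only [ContinuousLinearMap.smul_apply, smul_eq_mul]
        rw [mul_inv_cancel_left₀ (ne_of_gt hgn)]
      have hvx : v = ‖v‖ • x := by
        rw [hxdef, smul_smul, mul_inv_cancel₀ (ne_of_gt hvn), one_smul]
      have hfy : f y > 1 - ε := hy2
      have happ : (ContinuousLinearMap.id ℝ X + T) y = y + g y • v := by simp [hT]
      have hlow : 1 + c - ε * (1 + 2 * c) < ‖(ContinuousLinearMap.id ℝ X + T) y‖ := by
        rw [happ]
        have hest : h (y + g y • v) ≤ ‖y + g y • v‖ := by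
          have := h.le_opNorm (y + g y • v)
          rw [hh1, one_mul] at this
          exact le_trans (le_trans (le_abs_self _) (le_of_eq (Real.norm_eq_abs _).symm)) this
        have hhv : h v = ‖v‖ * h x := by
          conv_lhs => rw [hvx]
          rw [map_smul, smul_eq_mul]
        have hval : h (y + g y • v) = h y + c * (f y * h x) := by
          rw [map_add, map_smul, smul_eq_mul, hgy, hhv, hc]
          ring
        have hε1' : ε < 1 := by linarith
        have : 1 + c - ε * (1 + 2 * c) < h y + c * (f y * h x) := by
          have hfe : (0:ℝ) < 1 - ε := by linarith
          have p1 : (1 - ε) * (1 - ε) ≤ f y * h x :=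
            mul_le_mul hfy.le hhx'.le hfe.le (by linarith)
          have p2 : c * ((1 - ε) * (1 - ε)) ≤ c * (f y * h x) :=
            mul_le_mul_of_nonneg_left p1 hcpos.le
          have p3 : c * ((1 - ε) * (1 - ε)) = c - 2 * c * ε + c * (ε * ε) := by ring
          have p4 : 0 ≤ c * (ε * ε) := mul_nonneg hcpos.le (mul_nonneg hε.le hε.le)
          linarith
        calc 1 + c - ε * (1 + 2 * c) < h (y + g y • v) := by rw [hval]; exact this
          _ ≤ ‖y + g y • v‖ := hest
      have hup : ‖(ContinuousLinearMap.id ℝ X + T) y‖ ≤ ‖ContinuousLinearMap.id ℝ X + T‖ :=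
        (ContinuousLinearMap.id ℝ X + T).unit_le_opNorm y hy1
      linarith
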